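/- For all real t with 0 ≤ t ≤ π/2, arctan(cos t) ≥ π/4 − t/2, with equality if and only if t = 0 or t = π/2. -/

import Mathlib

open Real

lemma aux_denom {t : ℝ} (h0 : 0 ≤ t) (h1 : t ≤ π/2) : 0 < cos (t/2) + sin (t/2) := by
  have hc : 0 < cos (t/2) :=
    Real.cos_pos_of_mem_Ioo ⟨by nlinarith [pi_pos], by nlinarith [pi_pos]⟩
  have hs : 0 ≤ sin (t/2) :=
    Real.sin_nonneg_of_nonneg_of_le_pi (by linarith) (by nlinarith [pi_pos])
  linarith

lemma aux_key {t : ℝ} (h0 : 0 ≤ t) (h1 : t ≤ π/2) :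
    cos t - tan (π/4 - t/2) = (cos (t/2) - sin (t/2)) * sin t / (cos (t/2) + sin (t/2)) := by
  have hd := aux_denom h0 h1
  have hcos4 : cos (π/4 - t/2) = (√2/2) * (cos (t/2) + sin (t/2)) := by
    rw [Real.cos_sub, Real.cos_pi_div_four, Real.sin_pi_div_four]; ring
  have hsin4 : sin (π/4 - t/2) = (√2/2) * (cos (t/2) - sin (t/2)) := by
    rw [Real.sin_sub, Real.cos_pi_div_four, Real.sin_pi_div_four]; ring
  have ht : cos t = cos (t/2)^2 - sin (t/2)^2 := by
    have h := Real.cos_two_mul (t/2)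
    rw [show 2*(t/2) = t by ring] at h
    linarith [Real.sin_sq_add_cos_sq (t/2)]
  have hst : sin t = 2 * sin (t/2) * cos (t/2) := by
    have h := Real.sin_two_mul (t/2)
    rw [show 2*(t/2) = t by ring] at h
    linarith
  have h2 : (0:ℝ) < √2 := by positivity
  rw [Real.tan_eq_sin_div_cos, hsin4, hcos4, ht, hst]
  have hpyth := Real.sin_sq_add_cos_sq (t/2)
  field_simp
  linear_combination (cos (t/2) - sin (t/2)) * hpyth

theorem stmt6 :
    (∀ t : ℝ, 0 ≤ t → t ≤ π/2 → arctan (cos t) ≥ π/4 - t/2) ∧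
    (∀ t : ℝ, 0 ≤ t → t ≤ π/2 → (arctan (cos t) = π/4 - t/2 ↔ t = 0 ∨ t = π/2)) := by
  have hrange : ∀ t : ℝ, 0 ≤ t → t ≤ π/2 → arctan (tan (π/4 - t/2)) = π/4 - t/2 := by
    intro t h0 h1
    exact Real.arctan_tan (by nlinarith [pi_pos]) (by nlinarith [pi_pos])
  have hineq : ∀ t : ℝ, 0 ≤ t → t ≤ π/2 → tan (π/4 - t/2) ≤ cos t := by
    intro t h0 h1
    have hkey := aux_key h0 h1
    have hd := aux_denom h0 h1
    have hcs : 0 ≤ cos (t/2) - sin (t/2) := by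
      have h22 : √2 * √2 = 2 := Real.mul_self_sqrt (by norm_num)
      have : cos (t/2) - sin (t/2) = √2 * cos (t/2 + π/4) := by
        rw [Real.cos_add, Real.cos_pi_div_four, Real.sin_pi_div_four]
        linear_combination (-(cos (t/2) - sin (t/2))/2) * h22
      rw [this]
      have := Real.cos_nonneg_of_mem_Icc (x := t/2 + π/4)
        ⟨by nlinarith [pi_pos], by nlinarith [pi_pos]⟩
      positivity
    have hs : 0 ≤ sin t := Real.sin_nonneg_of_nonneg_of_le_pi h0 (by nlinarith [pi_pos])
    nlinarith [mul_nonneg hcs hs, div_nonneg (mul_nonneg hcs hs) hd.le]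
  constructor
  · intro t h0 h1
    have := Real.arctan_strictMono.monotone (hineq t h0 h1)
    rw [hrange t h0 h1] at this
    linarith
  · intro t h0 h1
    constructor
    · intro heq
      by_contra hcon
      push_neg at hcon
      obtain ⟨hne0, hnep⟩ := hcon
      have h0' : 0 < t := lt_of_le_of_ne h0 (Ne.symm hne0)
      have h1' : t < π/2 := lt_of_le_of_ne h1 hnep
      -- strict inequality
      have hkey := aux_key h0 h1
      have hd := aux_denom h0 h1
      have hcs : 0 < cos (t/2) - sin (t/2) := by
        have h22 : √2 * √2 = 2 := Real.mul_self_sqrt (by norm_num)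
        have hrw : cos (t/2) - sin (t/2) = √2 * cos (t/2 + π/4) := by
          rw [Real.cos_add, Real.cos_pi_div_four, Real.sin_pi_div_four]
          linear_combination (-(cos (t/2) - sin (t/2))/2) * h22
        rw [hrw]
        have hcpos : 0 < cos (t/2 + π/4) :=
          Real.cos_pos_of_mem_Ioo ⟨by nlinarith [pi_pos], by nlinarith [pi_pos]⟩
        positivity
      have hs : 0 < sin t := Real.sin_pos_of_pos_of_lt_pi h0' (by nlinarith [pi_pos])
      have hlt : tan (π/4 - t/2) < cos t := by
        nlinarith [div_pos (mul_pos hcs hs) hd]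
      have := Real.arctan_strictMono hlt
      rw [hrange t h0 h1] at this
      linarith [heq ▸ this]
    · rintro (rfl | rfl)
      · rw [Real.cos_zero, Real.arctan_one]; ring
      · rw [Real.cos_pi_div_two, Real.arctan_zero]; ring
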